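/- Uniqueness in König's Theorem: Suppose f is holomorphic near 0 with f(0) = 0, f'(0) = λ, 0 < |λ| < 1, and φ₁, φ₂ are injective holomorphic maps on Δ_δ fixing 0 with nonvanishing derivative at 0 such that φ_i^{-1} ∘ f ∘ φ_i (z) = λz on Δ_δ for i = 1, 2. Then there is a nonzero constant c such that φ₂^{-1}(w) = c · φ₁^{-1}(w) for all w in a neighborhood of 0. -/
import Mathlib


open Metric Complex Filter

theorem koenig_uniqueness
    (f : ℂ → ℂ) (lam : ℂ) (δ : ℝ) (hδ : 0 < δ)
    (hf : AnalyticAt ℂ f 0) (hf0 : f 0 = 0) (hf' : deriv f 0 = lam)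
    (hlam : 0 < ‖lam‖) (hlam1 : ‖lam‖ < 1)
    (φ₁ φ₂ : ℂ → ℂ)
    (hφ₁ : DifferentiableOn ℂ φ₁ (ball (0:ℂ) δ))
    (hφ₂ : DifferentiableOn ℂ φ₂ (ball (0:ℂ) δ))
    (hinj₁ : Set.InjOn φ₁ (ball (0:ℂ) δ))
    (hinj₂ : Set.InjOn φ₂ (ball (0:ℂ) δ))
    (h₁0 : φ₁ 0 = 0) (h₂0 : φ₂ 0 = 0)
    (h₁' : deriv φ₁ 0 ≠ 0) (h₂' : deriv φ₂ 0 ≠ 0)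
    (hconj₁ : ∀ z ∈ ball (0:ℂ) δ, f (φ₁ z) = φ₁ (lam * z))
    (hconj₂ : ∀ z ∈ ball (0:ℂ) δ, f (φ₂ z) = φ₂ (lam * z)) :
    ∃ c : ℂ, c ≠ 0 ∧ ∃ ε : ℝ, 0 < ε ∧
      ∀ z ∈ ball (0:ℂ) ε, φ₁ z = φ₂ (c * z) := by
  have hlam0 : lam ≠ 0 := by
    intro h; rw [h] at hlam; simp at hlam
  have h0mem : (0:ℂ) ∈ ball (0:ℂ) δ := mem_ball_self hδ
  have hnb : ball (0:ℂ) δ ∈ nhds (0:ℂ) := isOpen_ball.mem_nhds h0mem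
  -- strict derivatives
  obtain ⟨p₂, hp₂⟩ : AnalyticAt ℂ φ₂ 0 := hφ₂.analyticAt hnb
  obtain ⟨p₁, hp₁⟩ : AnalyticAt ℂ φ₁ 0 := hφ₁.analyticAt hnb
  have hs₂ : HasStrictDerivAt φ₂ (deriv φ₂ 0) 0 := hp₂.deriv ▸ hp₂.hasStrictDerivAt
  have hd₁ : HasDerivAt φ₁ (deriv φ₁ 0) 0 := hp₁.deriv ▸ hp₁.hasDerivAt
  -- local inverse of φ₂
  set g : ℂ → ℂ := hs₂.localInverse φ₂ _ _ h₂' with hg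
  have hE := hs₂.hasStrictFDerivAt_equiv h₂'
  have hright : ∀ᶠ y in nhds (0:ℂ), φ₂ (g y) = y := by
    have := hE.eventually_right_inverse
    rwa [h₂0] at this
  have hleft : ∀ᶠ x in nhds (0:ℂ), g (φ₂ x) = x := hE.eventually_left_inverse
  have hg0 : g 0 = 0 := by
    have := hleft.self_of_nhds
    rwa [h₂0] at this
  have hginv : HasStrictDerivAt g (deriv φ₂ 0)⁻¹ 0 := by
    have := hs₂.to_localInverse (hf' := h₂')
    rwa [h₂0] at this
  -- ψ := g ∘ φ₁
  set ψ : ℂ → ℂ := fun z => g (φ₁ z) with hψdef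
  set c : ℂ := (deriv φ₂ 0)⁻¹ * deriv φ₁ 0 with hc
  have hcne : c ≠ 0 := mul_ne_zero (inv_ne_zero h₂') h₁'
  have hψ : HasDerivAt ψ c 0 := by
    have h : HasDerivAt g (deriv φ₂ 0)⁻¹ (φ₁ 0) := by rw [h₁0]; exact hginv.hasDerivAt
    exact h.comp 0 hd₁
  have hψ0 : ψ 0 = 0 := by simp [hψdef, h₁0, hg0]
  -- key eventual properties
  have hφ₁t : Tendsto φ₁ (nhds 0) (nhds (0:ℂ)) := by
    have := hd₁.continuousAt.tendsto; rwa [h₁0] at this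
  have hE1 : ∀ᶠ z in nhds (0:ℂ), φ₂ (ψ z) = φ₁ z := hφ₁t.eventually hright
  have hψt : Tendsto ψ (nhds 0) (nhds (0:ℂ)) := by
    have := hψ.continuousAt.tendsto; rwa [hψ0] at this
  have hE2 : ∀ᶠ z in nhds (0:ℂ), ψ z ∈ ball (0:ℂ) δ := hψt.eventually_mem hnb
  have hE3 : ∀ᶠ z in nhds (0:ℂ), z ∈ ball (0:ℂ) δ := hnb
  obtain ⟨ε, hε, hball⟩ := Metric.eventually_nhds_iff_ball.mp ((hE1.and hE2).and hE3)
  have hP : ∀ z ∈ ball (0:ℂ) ε, (φ₂ (ψ z) = φ₁ z ∧ ψ z ∈ ball (0:ℂ) δ) ∧ z ∈ ball (0:ℂ) δ :=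
    hball
  -- closure of balls under mult by lam^n
  have hmul : ∀ (w : ℂ) (r : ℝ), w ∈ ball (0:ℂ) r → lam * w ∈ ball (0:ℂ) r := by
    intro w r hw
    rw [mem_ball_zero_iff] at hw ⊢
    calc ‖lam * w‖ = ‖lam‖ * ‖w‖ := norm_mul _ _
    _ ≤ ‖w‖ := mul_le_of_le_one_left (norm_nonneg w) hlam1.le
    _ < r := hw
  -- functional equation for ψ
  have hstep : ∀ z ∈ ball (0:ℂ) ε, ψ (lam * z) = lam * ψ z := by
    intro z hz
    have hz' := hP z hz
    have hlz := hP (lam * z) (hmul z ε hz)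
    apply hinj₂ hlz.1.2 (hmul _ δ hz'.1.2)
    rw [hlz.1.1, ← hconj₁ z hz'.2, ← hz'.1.1, hconj₂ _ hz'.1.2]
  have hpow : ∀ (n : ℕ), ∀ z ∈ ball (0:ℂ) ε, lam ^ n * z ∈ ball (0:ℂ) ε := by
    intro n z hz
    induction n with
    | zero => simpa using hz
    | succ m ihm => rw [pow_succ, mul_comm (lam ^ m) lam, mul_assoc]; exact hmul _ _ ihm
  have hiter : ∀ (n : ℕ), ∀ z ∈ ball (0:ℂ) ε, ψ (lam ^ n * z) = lam ^ n * ψ z := by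
    intro n
    induction n with
    | zero => intro z _; simp
    | succ n ih =>
      intro z hz
      have hzn : lam ^ n * z ∈ ball (0:ℂ) ε := hpow n z hz
      calc ψ (lam ^ (n+1) * z) = ψ (lam * (lam ^ n * z)) := by ring_nf
      _ = lam * ψ (lam ^ n * z) := hstep _ hzn
      _ = lam * (lam ^ n * ψ z) := by rw [ih z hz]
      _ = lam ^ (n+1) * ψ z := by ring
  -- ψ is linear: ψ z = c * z
  have hlin : ∀ z ∈ ball (0:ℂ) ε, ψ z = c * z := by
    intro z hz
    rcases eq_or_ne z 0 with rfl | hz0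
    · simpa using hψ0
    · have hslope : Tendsto (slope ψ 0) (nhdsWithin 0 {(0:ℂ)}ᶜ) (nhds c) :=
        hasDerivAt_iff_tendsto_slope.mp hψ
      have hseq : Tendsto (fun n : ℕ => lam ^ n * z) atTop (nhdsWithin 0 {(0:ℂ)}ᶜ) := by
        apply tendsto_nhdsWithin_of_tendsto_nhds_of_eventually_within
        · have := (tendsto_pow_atTop_nhds_zero_of_norm_lt_one hlam1).mul_const z
          simpa using this
        · filter_upwards with n
          exact mul_ne_zero (pow_ne_zero n hlam0) hz0
      have ht : Tendsto (fun n : ℕ => slope ψ 0 (lam ^ n * z)) atTop (nhds c) :=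
        hslope.comp hseq
      have heq : ∀ n : ℕ, slope ψ 0 (lam ^ n * z) = ψ z / z := by
        intro n
        have hne : lam ^ n * z ≠ 0 := mul_ne_zero (pow_ne_zero n hlam0) hz0
        rw [slope_def_field, hψ0, hiter n z hz]
        field_simp
        ring
      have ht' : Tendsto (fun _ : ℕ => ψ z / z) atTop (nhds c) := by
        simpa [heq] using ht
      have := tendsto_nhds_unique ht' tendsto_const_nhds
      field_simp at this
      exact this.symm
  exact ⟨c, hcne, ε, hε, fun z hz => by rw [← (hP z hz).1.1, hlin z hz]⟩
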